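/- arXiv:2506.00346 — 2 statements merged into one kernel-verified Lean document; each statement's English description precedes it below -/
import Mathlib

section
/- For every Hermitian matrix σ ∈ ℂ^{m×m}, every s ∈ [0,T] and every t ≥ 0, the trace-norm inequality ‖e^{tA(s)} σ e^{tA(s)†}‖₁ ≤ ‖σ‖₁ holds. -/
open Matrix Set
open scoped ComplexOrder

section Analysis
open NormedSpace
attribute [local instance] Matrix.linftyOpNormedAddCommGroup Matrix.linftyOpNormedRing
  Matrix.linftyOpNormedAlgebra

variable {m : ℕ}

/-- The quadratic-form functional `M ↦ xᴴ M x` as a continuous linear map. -/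
noncomputable def qf (x : Fin m → ℂ) : Matrix (Fin m) (Fin m) ℂ →L[ℂ] ℂ :=
  LinearMap.toContinuousLinearMap
    { toFun := fun M => star x ⬝ᵥ (M *ᵥ x)
      map_add' := fun M N => by simp [Matrix.add_mulVec, dotProduct_add]
      map_smul' := fun c M => by simp [Matrix.smul_mulVec] }

lemma qf_apply (x : Fin m → ℂ) (M : Matrix (Fin m) (Fin m) ℂ) :
    qf x M = star x ⬝ᵥ (M *ᵥ x) := rfl

lemma hasDerivAt_e (A : Matrix (Fin m) (Fin m) ℂ) (x : Fin m → ℂ) (z : ℂ) :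
    HasDerivAt (fun w : ℂ => qf x (exp (w • Aᴴ) * exp (w • A)))
      (qf x (Aᴴ * exp (z • Aᴴ) * exp (z • A) + exp (z • Aᴴ) * (A * exp (z • A)))) z := by
  have h1 : HasDerivAt (fun w : ℂ => exp (w • Aᴴ)) (Aᴴ * exp (z • Aᴴ)) z :=
    hasDerivAt_exp_smul_const' _ _
  have h2 : HasDerivAt (fun w : ℂ => exp (w • A)) (A * exp (z • A)) z :=
    hasDerivAt_exp_smul_const' _ _
  have h3 := h1.mul h2
  exact (qf x).hasFDerivAt.comp_hasDerivAt z h3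

lemma quad_mono {A : Matrix (Fin m) (Fin m) ℂ} (hA : (-(A + Aᴴ)).PosSemidef)
    (x : Fin m → ℂ) {t : ℝ} (ht : 0 ≤ t) :
    (star (exp ((t:ℂ) • A) *ᵥ x) ⬝ᵥ (exp ((t:ℂ) • A) *ᵥ x)).re ≤ (star x ⬝ᵥ x).re := by
  set e : ℂ → ℂ := fun w => qf x (exp (w • Aᴴ) * exp (w • A)) with he
  set g : ℝ → ℝ := fun r => (e r).re with hg
  have hgd : ∀ u : ℝ, HasDerivAt g
      ((qf x (Aᴴ * exp ((u:ℂ) • Aᴴ) * exp ((u:ℂ) • A) +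
        exp ((u:ℂ) • Aᴴ) * (A * exp ((u:ℂ) • A)))).re) u :=
    fun u => (hasDerivAt_e A x (u:ℂ)).real_of_complex
  have hconj : ∀ u : ℝ, exp ((u:ℂ) • Aᴴ) = (exp ((u:ℂ) • A))ᴴ := by
    intro u
    rw [← Matrix.exp_conjTranspose]
    congr 1
    rw [Matrix.conjTranspose_smul]
    congr 1
    simp
  have hcomm : ∀ u : ℝ, A * exp ((u:ℂ) • A) = exp ((u:ℂ) • A) * A := by
    intro u
    exact ((Commute.refl A).smul_right ((u:ℂ))).exp_right
  have hderiv_nonpos : ∀ u : ℝ,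
      (qf x (Aᴴ * exp ((u:ℂ) • Aᴴ) * exp ((u:ℂ) • A) +
        exp ((u:ℂ) • Aᴴ) * (A * exp ((u:ℂ) • A)))).re ≤ 0 := by
    intro u
    set E := exp ((u:ℂ) • A) with hE
    set v := E *ᵥ x with hv
    have key : qf x (Aᴴ * exp ((u:ℂ) • Aᴴ) * exp ((u:ℂ) • A) +
        exp ((u:ℂ) • Aᴴ) * (A * exp ((u:ℂ) • A))) = star v ⬝ᵥ ((Aᴴ + A) *ᵥ v) := by
      rw [hconj u, qf_apply, Matrix.add_mulVec, dotProduct_add, Matrix.add_mulVec,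
        dotProduct_add]
      congr 1
      · calc star x ⬝ᵥ ((Aᴴ * Eᴴ * E) *ᵥ x)
            = star x ⬝ᵥ (((E * A)ᴴ * E) *ᵥ x) := by rw [← Matrix.conjTranspose_mul]
          _ = star x ⬝ᵥ ((E * A)ᴴ *ᵥ v) := by rw [← Matrix.mulVec_mulVec, hv]
          _ = star ((E * A) *ᵥ x) ⬝ᵥ v := by
              rw [Matrix.dotProduct_mulVec, ← Matrix.star_mulVec]
          _ = star (A *ᵥ v) ⬝ᵥ v := by
              rw [← hcomm u, ← Matrix.mulVec_mulVec, ← hv]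
          _ = star v ⬝ᵥ (Aᴴ *ᵥ v) := by
              rw [Matrix.star_mulVec, ← Matrix.dotProduct_mulVec]
      · calc star x ⬝ᵥ ((Eᴴ * (A * E)) *ᵥ x)
            = star x ⬝ᵥ (Eᴴ *ᵥ ((A * E) *ᵥ x)) := by rw [← Matrix.mulVec_mulVec]
          _ = star x ⬝ᵥ (Eᴴ *ᵥ ((E * A) *ᵥ x)) := by rw [hcomm u]
          _ = star x ⬝ᵥ (Eᴴ *ᵥ (A *ᵥ v)) := by rw [← hcomm u, ← Matrix.mulVec_mulVec, ← hv]
          _ = star (E *ᵥ x) ⬝ᵥ (A *ᵥ v) := by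
              rw [Matrix.dotProduct_mulVec, ← Matrix.star_mulVec]
          _ = star v ⬝ᵥ (A *ᵥ v) := by rw [← hv]
    rw [key]
    have h0 := hA.dotProduct_mulVec_nonneg v
    rw [Matrix.neg_mulVec, dotProduct_neg] at h0
    have h1 := (Complex.le_def.mp h0).1
    have h2 : (star v ⬝ᵥ ((A + Aᴴ) *ᵥ v)).re = (star v ⬝ᵥ ((Aᴴ + A) *ᵥ v)).re := by
      rw [add_comm A Aᴴ]
    simp only [Complex.zero_re, Complex.neg_re] at h1
    linarith
  have hanti : Antitone g :=
    antitone_of_deriv_nonpos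
      (fun u => (hgd u).differentiableAt)
      (fun u => by rw [(hgd u).deriv]; exact hderiv_nonpos u)
  have hle : g t ≤ g 0 := hanti ht
  have hg0 : g 0 = (star x ⬝ᵥ x).re := by
    simp only [hg, he, Complex.ofReal_zero, zero_smul, exp_zero, Matrix.one_mul, qf_apply,
      Matrix.one_mulVec]
  have hgt : g t = (star (exp ((t:ℂ) • A) *ᵥ x) ⬝ᵥ (exp ((t:ℂ) • A) *ᵥ x)).re := by
    simp only [hg, he, qf_apply, hconj t, ← Matrix.mulVec_mulVec, Matrix.dotProduct_mulVec
      (star x), ← Matrix.star_mulVec]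
  rw [← hgt, ← hg0]
  exact hle



lemma exp_contraction {A : Matrix (Fin m) (Fin m) ℂ} (hA : (-(A + Aᴴ)).PosSemidef)
    {t : ℝ} (ht : 0 ≤ t) :
    ((1 : Matrix (Fin m) (Fin m) ℂ) -
      (exp ((t:ℂ) • A))ᴴ * exp ((t:ℂ) • A)).PosSemidef := by
  set E := exp ((t:ℂ) • A) with hE
  rw [Matrix.posSemidef_iff_dotProduct_mulVec]
  constructor
  · unfold Matrix.IsHermitian
    rw [Matrix.conjTranspose_sub, Matrix.conjTranspose_one, Matrix.conjTranspose_mul,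
      Matrix.conjTranspose_conjTranspose]
  · intro x
    have hq : star x ⬝ᵥ ((1 - Eᴴ * E) *ᵥ x)
        = star x ⬝ᵥ x - star (E *ᵥ x) ⬝ᵥ (E *ᵥ x) := by
      rw [Matrix.sub_mulVec, dotProduct_sub, Matrix.one_mulVec]
      congr 1
      rw [← Matrix.mulVec_mulVec, Matrix.dotProduct_mulVec, ← Matrix.star_mulVec]
    rw [hq]
    have h1 := dotProduct_star_self_nonneg x
    have h2 := dotProduct_star_self_nonneg (E *ᵥ x)
    have h3 := quad_mono hA x ht
    rw [Complex.le_def] at h1 h2 ⊢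
    simp only [Complex.zero_re, Complex.zero_im, Complex.sub_re, Complex.sub_im] at *
    constructor
    · linarith [h3]
    · rw [← h1.2, ← h2.2]; ring

end Analysis


attribute [local instance] Matrix.normedAddCommGroup Matrix.normedSpace

/-- Trace norm: `‖X‖₁ = Tr √(XᴴX)`. -/
noncomputable def traceNorm {m : ℕ} (X : Matrix (Fin m) (Fin m) ℂ) : ℝ :=
  (((Matrix.posSemidef_conjTranspose_mul_self X).1.eigenvectorUnitary.1 *
    diagonal (((↑) : ℝ → ℂ) ∘ (Real.sqrt ·) ∘ (Matrix.posSemidef_conjTranspose_mul_self X).1.eigenvalues) *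
    (star (Matrix.posSemidef_conjTranspose_mul_self X).1.eigenvectorUnitary :
      Matrix (Fin m) (Fin m) ℂ)).trace).re

/-- `A(t) = -i H(t) - (1/2) ∑ₖ γₖ(t) Lₖᴴ Lₖ`. -/
noncomputable def Aop {m K : ℕ} (H : ℝ → Matrix (Fin m) (Fin m) ℂ)
    (L : Fin K → Matrix (Fin m) (Fin m) ℂ) (γ : Fin K → ℝ → ℝ) (t : ℝ) : Matrix (Fin m) (Fin m) ℂ :=
  (-Complex.I) • H t - (1 / 2 : ℂ) • ∑ k, (γ k t : ℂ) • ((L k)ᴴ * L k)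

section TraceNormLemmas
variable {m : ℕ}

variable {m : ℕ}

lemma UstarU {X : Matrix (Fin m) (Fin m) ℂ} (hX : X.IsHermitian) :
    (star (hX.eigenvectorUnitary : Matrix (Fin m) (Fin m) ℂ)) * hX.eigenvectorUnitary = 1 :=
  Matrix.mem_unitaryGroup_iff'.mp (hX.eigenvectorUnitary).2

lemma conj_sq {X : Matrix (Fin m) (Fin m) ℂ} (hX : X.IsHermitian) (c : Fin m → ℂ) :
    ((hX.eigenvectorUnitary : Matrix (Fin m) (Fin m) ℂ) * diagonal c *
      star (hX.eigenvectorUnitary : Matrix (Fin m) (Fin m) ℂ)) ^ 2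
    = (hX.eigenvectorUnitary : Matrix (Fin m) (Fin m) ℂ) * diagonal (fun i => c i * c i) *
      star (hX.eigenvectorUnitary : Matrix (Fin m) (Fin m) ℂ) := by
  rw [pow_two]
  calc (↑hX.eigenvectorUnitary * diagonal c * star (hX.eigenvectorUnitary : Matrix (Fin m) (Fin m) ℂ)) *
        (↑hX.eigenvectorUnitary * diagonal c * star (hX.eigenvectorUnitary : Matrix (Fin m) (Fin m) ℂ))
      = ↑hX.eigenvectorUnitary * diagonal c *
        ((star (hX.eigenvectorUnitary : Matrix (Fin m) (Fin m) ℂ) * ↑hX.eigenvectorUnitary) *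
          (diagonal c * star (hX.eigenvectorUnitary : Matrix (Fin m) (Fin m) ℂ))) := by
        simp only [Matrix.mul_assoc]
    _ = _ := by
        rw [UstarU hX, Matrix.one_mul, ← Matrix.mul_assoc, Matrix.mul_assoc _ (diagonal c) (diagonal c),
          diagonal_mul_diagonal]

lemma traceNorm_hermitian {X : Matrix (Fin m) (Fin m) ℂ} (hX : X.IsHermitian) :
    traceNorm X = ∑ i, |hX.eigenvalues i| := by
  set U : Matrix (Fin m) (Fin m) ℂ := ↑hX.eigenvectorUnitary with hU
  set S : Matrix (Fin m) (Fin m) ℂ :=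
    U * diagonal (fun i => ((|hX.eigenvalues i| : ℝ) : ℂ)) * star U with hS
  have hSpsd : S.PosSemidef := by
    apply Matrix.PosSemidef.mul_mul_conjTranspose_same
    · exact Matrix.PosSemidef.diagonal (fun i => by positivity)
  have hsq : S ^ 2 = Xᴴ * X := by
    rw [hX, hS, hU, conj_sq hX]
    conv_rhs => rw [hX.spectral_theorem, Unitary.conjStarAlgAut_apply, ← pow_two, conj_sq hX (RCLike.ofReal ∘ hX.eigenvalues)]
    have habs : (fun i => ((|hX.eigenvalues i| : ℝ) : ℂ) * ((|hX.eigenvalues i| : ℝ) : ℂ))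
        = fun i => (RCLike.ofReal ∘ hX.eigenvalues) i * (RCLike.ofReal ∘ hX.eigenvalues) i := by
      funext i
      simp only [Function.comp_apply]
      rw [← Complex.ofReal_mul, abs_mul_abs_self, Complex.ofReal_mul]
      exact rfl
    rw [habs]
  have heq : S = ((Matrix.posSemidef_conjTranspose_mul_self X).1.eigenvectorUnitary.1 *
      diagonal (((↑) : ℝ → ℂ) ∘ (Real.sqrt ·) ∘ (Matrix.posSemidef_conjTranspose_mul_self X).1.eigenvalues) *
      (star (Matrix.posSemidef_conjTranspose_mul_self X).1.eigenvectorUnitary :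
        Matrix (Fin m) (Fin m) ℂ)) := by
    open scoped MatrixOrder in
    have h0 : (0 : Matrix (Fin m) (Fin m) ℂ) ≤ Xᴴ * X :=
      Matrix.nonneg_iff_posSemidef.mpr (Matrix.posSemidef_conjTranspose_mul_self X)
    open scoped MatrixOrder in
    have hS0 : (0 : Matrix (Fin m) (Fin m) ℂ) ≤ S := Matrix.nonneg_iff_posSemidef.mpr hSpsd
    open scoped MatrixOrder in
    have e1 : ((Matrix.posSemidef_conjTranspose_mul_self X).1.eigenvectorUnitary.1 *
        diagonal (((↑) : ℝ → ℂ) ∘ (Real.sqrt ·) ∘ (Matrix.posSemidef_conjTranspose_mul_self X).1.eigenvalues) *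
        (star (Matrix.posSemidef_conjTranspose_mul_self X).1.eigenvectorUnitary :
          Matrix (Fin m) (Fin m) ℂ)) = CFC.sqrt (Xᴴ * X) := by
      rw [CFC.sqrt_eq_real_sqrt _ h0, cfcₙ_eq_cfc,
        (Matrix.posSemidef_conjTranspose_mul_self X).1.cfc_eq, IsHermitian.cfc,
        Unitary.conjStarAlgAut_apply]
      rfl
    open scoped MatrixOrder in
    rw [e1, eq_comm, CFC.sqrt_eq_iff _ _ h0 hS0, ← pow_two]
    exact hsq
  rw [traceNorm, ← heq, hS, Matrix.trace_mul_cycle, UstarU hX, Matrix.one_mul,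
    Matrix.trace_diagonal]
  simp

lemma psd_diag_nonneg {N : Matrix (Fin m) (Fin m) ℂ} (hN : N.PosSemidef) (i : Fin m) :
    0 ≤ N i i := by
  exact hN.diag_nonneg

lemma psd_trace_re_nonneg {N : Matrix (Fin m) (Fin m) ℂ} (hN : N.PosSemidef) :
    0 ≤ N.trace.re := by
  rw [Matrix.trace]
  simp only [Complex.re_sum]
  exact Finset.sum_nonneg fun i _ => (Complex.le_def.mp (psd_diag_nonneg hN i)).1.trans_eq rfl

lemma traceNorm_le_of_psd_decomp {X P Q : Matrix (Fin m) (Fin m) ℂ}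
    (hX : X.IsHermitian) (hP : P.PosSemidef) (hQ : Q.PosSemidef) (hPQ : X = P - Q) :
    traceNorm X ≤ P.trace.re + Q.trace.re := by
  subst hPQ
  set U : Matrix (Fin m) (Fin m) ℂ := ↑hX.eigenvectorUnitary with hU
  have hNpsd : (star U * P * U).PosSemidef := hP.conjTranspose_mul_mul_same U
  have hMpsd : (star U * Q * U).PosSemidef := hQ.conjTranspose_mul_mul_same U
  set N := star U * P * U with hN
  set M := star U * Q * U with hM
  have hdiag : Matrix.diagonal (RCLike.ofReal ∘ hX.eigenvalues) = N - M := by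
    rw [← hX.conjStarAlgAut_star_eigenvectorUnitary, Unitary.conjStarAlgAut_star_apply, hN, hM]
    noncomm_ring
  have hlam : ∀ i, hX.eigenvalues i = (N i i).re - (M i i).re := by
    intro i
    have := congrFun (congrFun hdiag i) i
    rw [diagonal_apply_eq] at this
    have hre := congrArg Complex.re this
    simpa using hre
  have hbound : ∀ i, |hX.eigenvalues i| ≤ (N i i).re + (M i i).re := by
    intro i
    rw [hlam i]
    have h1 : 0 ≤ (N i i).re := (Complex.le_def.mp (psd_diag_nonneg hNpsd i)).1
    have h2 : 0 ≤ (M i i).re := (Complex.le_def.mp (psd_diag_nonneg hMpsd i)).1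
    rw [abs_sub_le_iff]
    constructor <;> linarith
  have htr : ∀ (R : Matrix (Fin m) (Fin m) ℂ), (star U * R * U).trace = R.trace := by
    intro R
    rw [Matrix.trace_mul_cycle, Matrix.mem_unitaryGroup_iff.mp
      (hX.eigenvectorUnitary).2, Matrix.one_mul]
  calc traceNorm (P - Q) = ∑ i, |hX.eigenvalues i| := traceNorm_hermitian hX
    _ ≤ ∑ i, ((N i i).re + (M i i).re) := Finset.sum_le_sum fun i _ => hbound i
    _ = N.trace.re + M.trace.re := by
        rw [Finset.sum_add_distrib, Matrix.trace, Matrix.trace]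
        simp [Matrix.diag]
    _ = P.trace.re + Q.trace.re := by rw [hN, hM, htr, htr]

lemma traceNorm_eq_decomp {σ : Matrix (Fin m) (Fin m) ℂ} (hσ : σ.IsHermitian) :
    ∃ P Q : Matrix (Fin m) (Fin m) ℂ, P.PosSemidef ∧ Q.PosSemidef ∧ σ = P - Q ∧
      P.trace.re + Q.trace.re = traceNorm σ := by
  set U : Matrix (Fin m) (Fin m) ℂ := ↑hσ.eigenvectorUnitary with hU
  have htr : ∀ (c : Fin m → ℂ), (U * diagonal c * star U).trace = ∑ i, c i := by
    intro c
    rw [Matrix.trace_mul_cycle, UstarU hσ, Matrix.one_mul, Matrix.trace_diagonal]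
  refine ⟨U * diagonal (fun i => ((max (hσ.eigenvalues i) 0 : ℝ) : ℂ)) * star U,
          U * diagonal (fun i => ((max (-hσ.eigenvalues i) 0 : ℝ) : ℂ)) * star U,
          Matrix.PosSemidef.mul_mul_conjTranspose_same
            (Matrix.PosSemidef.diagonal (fun i => by positivity)) U,
          Matrix.PosSemidef.mul_mul_conjTranspose_same
            (Matrix.PosSemidef.diagonal (fun i => by positivity)) U, ?_, ?_⟩
  · rw [← Matrix.sub_mul, ← Matrix.mul_sub, Matrix.diagonal_sub]
    conv_lhs => rw [hσ.spectral_theorem, Unitary.conjStarAlgAut_apply]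
    have hfun : (RCLike.ofReal ∘ hσ.eigenvalues : Fin m → ℂ) =
        fun i => ((max (hσ.eigenvalues i) 0 : ℝ) : ℂ) - ((max (-hσ.eigenvalues i) 0 : ℝ) : ℂ) := by
      funext i
      rw [← Complex.ofReal_sub, max_zero_sub_max_neg_zero_eq_self]
      exact rfl
    rw [hfun]
  · rw [htr, htr, traceNorm_hermitian hσ, ← Complex.ofReal_sum, ← Complex.ofReal_sum,
      Complex.ofReal_re, Complex.ofReal_re, ← Finset.sum_add_distrib]
    apply Finset.sum_congr rfl
    intro i _
    rcases le_total (hσ.eigenvalues i) 0 with h | h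
    · rw [abs_of_nonpos h]; simp [max_eq_right h, max_eq_left (neg_nonneg.mpr h)]
    · rw [abs_of_nonneg h]; simp [max_eq_right (neg_nonpos.mpr h), max_eq_left h]

lemma trace_conj_le {P C : Matrix (Fin m) (Fin m) ℂ} (hP : P.PosSemidef)
    (hC : ((1 : Matrix (Fin m) (Fin m) ℂ) - Cᴴ * C).PosSemidef) :
    (C * P * Cᴴ).trace.re ≤ P.trace.re := by
  obtain ⟨S, hSH, hSS⟩ : ∃ S : Matrix (Fin m) (Fin m) ℂ, Sᴴ = S ∧ S * S = P :=
    by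
      open scoped MatrixOrder in
      exact ⟨CFC.sqrt P,
        (Matrix.nonneg_iff_posSemidef.mp (CFC.sqrt_nonneg P)).1,
        CFC.sqrt_mul_sqrt_self P (Matrix.nonneg_iff_posSemidef.mpr hP)⟩
  have key : (S * (1 - Cᴴ * C) * S).PosSemidef := by
    have := hC.conjTranspose_mul_mul_same S
    rwa [hSH] at this
  have h0 : 0 ≤ (S * (1 - Cᴴ * C) * S).trace.re := psd_trace_re_nonneg key
  have hexp : (S * (1 - Cᴴ * C) * S).trace = P.trace - (C * P * Cᴴ).trace := by
    rw [Matrix.mul_sub, Matrix.sub_mul, Matrix.mul_one, Matrix.trace_sub, hSS]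
    congr 1
    rw [Matrix.trace_mul_cycle S (Cᴴ * C) S, hSS, ← Matrix.mul_assoc,
      Matrix.trace_mul_cycle P Cᴴ C]
  have := congrArg Complex.re hexp
  rw [Complex.sub_re] at this
  linarith

end TraceNormLemmas

lemma Aop_dissipative {m K : ℕ} (H : ℝ → Matrix (Fin m) (Fin m) ℂ)
    (hH : ∀ t, (H t).IsHermitian) (L : Fin K → Matrix (Fin m) (Fin m) ℂ)
    (γ : Fin K → ℝ → ℝ) (hγ : ∀ k t, 0 ≤ γ k t) (s : ℝ) :
    (-(Aop H L γ s + (Aop H L γ s)ᴴ)).PosSemidef := by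
  have hAH : (Aop H L γ s)ᴴ
      = Complex.I • H s - (1 / 2 : ℂ) • ∑ k, (γ k s : ℂ) • ((L k)ᴴ * L k) := by
    unfold Aop
    rw [Matrix.conjTranspose_sub, Matrix.conjTranspose_smul, Matrix.conjTranspose_smul,
      Matrix.conjTranspose_sum]
    congr 1
    · rw [(hH s)]
      congr 1
      simp
    · congr 1
      · simp
      · apply Finset.sum_congr rfl
        intro k _
        rw [Matrix.conjTranspose_smul, Matrix.conjTranspose_mul,
          Matrix.conjTranspose_conjTranspose]
        congr 1
        simp [Complex.star_def, Complex.conj_ofReal]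
  have hsum : -(Aop H L γ s + (Aop H L γ s)ᴴ) = ∑ k, (γ k s : ℂ) • ((L k)ᴴ * L k) := by
    rw [hAH]
    unfold Aop
    module
  rw [hsum]
  apply Finset.sum_induction (fun k => (γ k s : ℂ) • ((L k)ᴴ * L k))
    (fun M => Matrix.PosSemidef M) (fun a b ha hb => ha.add hb) Matrix.PosSemidef.zero
  intro k _
  have h : (γ k s : ℂ) • ((L k)ᴴ * L k)
      = ((Real.sqrt (γ k s) : ℂ) • L k)ᴴ * ((Real.sqrt (γ k s) : ℂ) • L k) := by
    rw [Matrix.conjTranspose_smul, Matrix.smul_mul, Matrix.mul_smul, smul_smul]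
    congr 1
    rw [Complex.star_def, Complex.conj_ofReal, ← Complex.ofReal_mul,
      Real.mul_self_sqrt (hγ k s)]
  rw [h]
  exact Matrix.posSemidef_conjTranspose_mul_self _


theorem stmt_2 {m K : ℕ} (hm : 1 ≤ m) (hK : 1 ≤ K)
    (H : ℝ → Matrix (Fin m) (Fin m) ℂ) (hH : ∀ t, (H t).IsHermitian)
    (L : Fin K → Matrix (Fin m) (Fin m) ℂ)
    (γ : Fin K → ℝ → ℝ) (hγc : ∀ k, Continuous (γ k)) (hγ : ∀ k t, 0 ≤ γ k t)
    (T : ℝ) (hT : 0 < T)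
    (σ : Matrix (Fin m) (Fin m) ℂ) (hσ : σ.IsHermitian)
    (s : ℝ) (hs : s ∈ Set.Icc (0 : ℝ) T) (t : ℝ) (ht : 0 ≤ t) :
    traceNorm (NormedSpace.exp (t • Aop H L γ s) * σ *
      NormedSpace.exp (t • (Aop H L γ s)ᴴ)) ≤ traceNorm σ := by
  set A := Aop H L γ s with hA
  have hdis : (-(A + Aᴴ)).PosSemidef := Aop_dissipative H hH L γ hγ s
  have hsm : ∀ B : Matrix (Fin m) (Fin m) ℂ, t • B = (t : ℂ) • B := fun B => by
    rw [← algebraMap_smul ℂ t B, Complex.coe_algebraMap]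
  set E := NormedSpace.exp ((t : ℂ) • A) with hE
  have hEH : NormedSpace.exp ((t : ℂ) • Aᴴ) = Eᴴ := by
    rw [hE, ← Matrix.exp_conjTranspose]
    congr 1
    rw [Matrix.conjTranspose_smul]
    congr 1
    simp
  have hC : ((1 : Matrix (Fin m) (Fin m) ℂ) - Eᴴ * E).PosSemidef := exp_contraction hdis ht
  obtain ⟨P, Q, hP, hQ, hPQ, htr⟩ := traceNorm_eq_decomp hσ
  have hX : (E * σ * Eᴴ) = E * P * Eᴴ - E * Q * Eᴴ := by rw [hPQ]; noncomm_ring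
  have hP' : (E * P * Eᴴ).PosSemidef := hP.mul_mul_conjTranspose_same E
  have hQ' : (E * Q * Eᴴ).PosSemidef := hQ.mul_mul_conjTranspose_same E
  have hXh : (E * σ * Eᴴ).IsHermitian := by rw [hX]; exact hP'.1.sub hQ'.1
  rw [hsm, hsm, hEH, ← hE]
  calc traceNorm (E * σ * Eᴴ)
      ≤ (E * P * Eᴴ).trace.re + (E * Q * Eᴴ).trace.re :=
        traceNorm_le_of_psd_decomp hXh hP' hQ' hX
    _ ≤ P.trace.re + Q.trace.re := add_le_add (trace_conj_le hP hC) (trace_conj_le hQ hC)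
    _ = traceNorm σ := htr
end

section
/- For every τ > 0, every n, and every Hermitian positive semidefinite matrix q ∈ ℂ^{m×m}, the one-step backward FREM output Ψ(t_{n+1}, q) is Hermitian and positive semidefinite. -/
open Matrix Set
open scoped ComplexOrder

attribute [local instance] Matrix.normedAddCommGroup Matrix.normedSpace

/-- Backward full-rank exponential midpoint one-step map `Ψ(tₙ₊₁, q)`;
the argument `tn1` is the time `tₙ₊₁`, so that `tₙ₊₁⁄₂ = tn1 - τ/2`. -/
noncomputable def Psi {m K : ℕ} (H : ℝ → Matrix (Fin m) (Fin m) ℂ)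
    (L : Fin K → Matrix (Fin m) (Fin m) ℂ) (γ : Fin K → ℝ → ℝ) (τ tn1 : ℝ) (q : Matrix (Fin m) (Fin m) ℂ) : Matrix (Fin m) (Fin m) ℂ :=
  NormedSpace.exp (τ • (Aop H L γ (tn1 - τ / 2))ᴴ) * q *
      NormedSpace.exp (τ • Aop H L γ (tn1 - τ / 2)) +
    (τ : ℂ) • ∑ k, (γ k (tn1 - τ / 2) : ℂ) •
      (NormedSpace.exp ((τ / 2) • (Aop H L γ (tn1 - τ / 2))ᴴ) * (L k)ᴴ *
        (NormedSpace.exp ((τ / 2) • (Aop H L γ tn1)ᴴ) *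
          (q + (τ / 2 : ℂ) • ∑ j, (γ j tn1 : ℂ) • ((L j)ᴴ * q * L j)) *
          NormedSpace.exp ((τ / 2) • Aop H L γ tn1)) * L k *
        NormedSpace.exp ((τ / 2) • Aop H L γ (tn1 - τ / 2)))




lemma psd_smul_real {m : ℕ} {c : ℝ} (hc : 0 ≤ c) {M : Matrix (Fin m) (Fin m) ℂ}
    (hM : M.PosSemidef) : ((c : ℂ) • M).PosSemidef := by
  rw [posSemidef_iff_dotProduct_mulVec]
  constructor
  · show ((c : ℂ) • M)ᴴ = _
    rw [Matrix.conjTranspose_smul, hM.1.eq]; simp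
  · intro x
    have h0 : (0 : ℂ) ≤ (c : ℂ) := by
      rw [Complex.le_def]; simp [hc]
    calc (0:ℂ) ≤ (c : ℂ) * (star x ⬝ᵥ M *ᵥ x) := mul_nonneg h0 (hM.dotProduct_mulVec_nonneg x)
    _ = star x ⬝ᵥ ((c : ℂ) • M) *ᵥ x := by
        rw [smul_mulVec, dotProduct_smul, smul_eq_mul]

lemma psd_sum {m K : ℕ} {f : Fin K → Matrix (Fin m) (Fin m) ℂ}
    (hf : ∀ k, (f k).PosSemidef) : (∑ k, f k).PosSemidef := by
  classical
  refine Finset.sum_induction f _ (fun a b ha hb => ha.add hb) Matrix.PosSemidef.zero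
    (fun k _ => hf k)

lemma exp_hermit_adj {m : ℕ} (c : ℝ) (A : Matrix (Fin m) (Fin m) ℂ) :
    NormedSpace.exp (c • Aᴴ) = (NormedSpace.exp (c • A))ᴴ := by
  have h1 : c • Aᴴ = star (c • A) := by
    simp [Matrix.star_eq_conjTranspose, Matrix.conjTranspose_smul]
  rw [h1, ← NormedSpace.star_exp, Matrix.star_eq_conjTranspose]

theorem stmt_8 {m K : ℕ} (hm : 1 ≤ m) (hK : 1 ≤ K)
    (H : ℝ → Matrix (Fin m) (Fin m) ℂ) (hH : ∀ t, (H t).IsHermitian)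
    (L : Fin K → Matrix (Fin m) (Fin m) ℂ)
    (γ : Fin K → ℝ → ℝ) (hγc : ∀ k, Continuous (γ k)) (hγ : ∀ k t, 0 ≤ γ k t)
    (T : ℝ) (hT : 0 < T)
    (τ : ℝ) (hτ : 0 < τ) (n : ℕ)
    (q : Matrix (Fin m) (Fin m) ℂ) (hq : q.PosSemidef) :
    (Psi H L γ τ (((n : ℝ) + 1) * τ) q).PosSemidef := by
  unfold Psi
  set t2 := ((n : ℝ) + 1) * τ - τ / 2
  set t1 := ((n : ℝ) + 1) * τ
  rw [exp_hermit_adj τ, exp_hermit_adj (τ/2) (Aop H L γ t2), exp_hermit_adj (τ/2) (Aop H L γ t1)]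
  have hinner : (q + (τ / 2 : ℂ) • ∑ j, (γ j t1 : ℂ) • ((L j)ᴴ * q * L j)).PosSemidef := by
    refine hq.add ?_
    have : ((τ/2 : ℝ) : ℂ) = (τ/2 : ℂ) := by push_cast; ring
    rw [← this]
    refine psd_smul_real (by linarith) (psd_sum fun j => ?_)
    exact psd_smul_real (hγ j t1) (hq.conjTranspose_mul_mul_same (L j))
  refine Matrix.PosSemidef.add (hq.conjTranspose_mul_mul_same _) ?_
  have hτc : ((τ : ℝ) : ℂ) = (τ : ℂ) := rfl
  refine psd_smul_real hτ.le (psd_sum fun k => ?_)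
  refine psd_smul_real (hγ k t2) ?_
  have hmid : ((NormedSpace.exp ((τ / 2) • Aop H L γ t1))ᴴ *
      (q + (τ / 2 : ℂ) • ∑ j, (γ j t1 : ℂ) • ((L j)ᴴ * q * L j)) *
      NormedSpace.exp ((τ / 2) • Aop H L γ t1)).PosSemidef :=
    hinner.conjTranspose_mul_mul_same _
  have := hmid.conjTranspose_mul_mul_same (L k * NormedSpace.exp ((τ / 2) • Aop H L γ t2))
  simpa [Matrix.conjTranspose_mul, mul_assoc] using this
end
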